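/- arXiv:2501.18414 — 13 statements merged into one kernel-verified Lean document; each statement's English description precedes it below -/
import Mathlib

section
/- Let (A, ⊣, ⊥, ⊢) be a triassociative algebra over a field K and let R : A → A be a Rota–Baxter operator of weight λ ∈ K on A. Define new products on A by x ◁ y = R(x) ⊣ y + x ⊣ R(y) + λ x ⊣ y, x △ y = R(x) ⊥ y + x ⊥ R(y) + λ x ⊥ y, and x ▷ y = R(x) ⊢ y + x ⊢ R(y) + λ x ⊢ y. Then (A, ◁, △, ▷) is a triassociative algebra; moreover R : (A, ◁, △, ▷) → (A, ⊣, ⊥, ⊢) is a morphism of triassociative algebras, and R is a Rota–Baxter operator of weight λ on (A, ◁, △, ▷). -/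
structure IsTriassoc (K : Type*) [Field K] {A : Type*} [AddCommGroup A] [Module K A]
    (l m r : A → A → A) : Prop where
  l_lin₁ : ∀ y, IsLinearMap K (fun x => l x y)
  l_lin₂ : ∀ x, IsLinearMap K (fun y => l x y)
  m_lin₁ : ∀ y, IsLinearMap K (fun x => m x y)
  m_lin₂ : ∀ x, IsLinearMap K (fun y => m x y)
  r_lin₁ : ∀ y, IsLinearMap K (fun x => r x y)
  r_lin₂ : ∀ x, IsLinearMap K (fun y => r x y)
  ax1 : ∀ x y z, l (l x y) z = l x (l y z)
  ax2 : ∀ x y z, r (r x y) z = r x (r y z)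
  ax3 : ∀ x y z, m (m x y) z = m x (m y z)
  ax4 : ∀ x y z, l (l x y) z = l x (r y z)
  ax5 : ∀ x y z, l (l x y) z = l x (m y z)
  ax6 : ∀ x y z, l (r x y) z = r x (l y z)
  ax7 : ∀ x y z, r (l x y) z = r x (r y z)
  ax8 : ∀ x y z, r (m x y) z = r x (r y z)
  ax9 : ∀ x y z, l (m x y) z = m x (l y z)
  ax10 : ∀ x y z, m (l x y) z = m x (r y z)
  ax11 : ∀ x y z, m (r x y) z = r x (m y z)

/-- The Rota–Baxter deformed product: `x ◁ y = R(x)∗y + x∗R(y) + λ • (x∗y)`. -/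
def rbProd {K : Type*} [Field K] {A : Type*} [AddCommGroup A] [Module K A]
    (mul : A → A → A) (R : A → A) (lam : K) : A → A → A :=
  fun x y => mul (R x) y + mul x (R y) + lam • mul x y

lemma rb_key {K A : Type*} [Field K] [AddCommGroup A] [Module K A]
    (a b c d : A → A → A) (R : A →ₗ[K] A) (lam : K)
    (ha1 : ∀ z, IsLinearMap K (fun x => a x z))
    (hc2 : ∀ x, IsLinearMap K (fun y => c x y))
    (hb : ∀ x y, b (R x) (R y) = R (rbProd b R lam x y))
    (hd : ∀ x y, d (R x) (R y) = R (rbProd d R lam x y))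
    (hax : ∀ x y z, a (b x y) z = c x (d y z)) :
    ∀ x y z, rbProd a R lam (rbProd b R lam x y) z
      = rbProd c R lam x (rbProd d R lam y z) := by
  have hA : ∀ u v z', a (u + v) z' = a u z' + a v z' := fun u v z' => (ha1 z').map_add u v
  have hAs : ∀ (s : K) u z', a (s • u) z' = s • a u z' := fun s u z' => (ha1 z').map_smul s u
  have hC : ∀ x' u v, c x' (u + v) = c x' u + c x' v := fun x' u v => (hc2 x').map_add u v
  have hCs : ∀ x' (s : K) u, c x' (s • u) = s • c x' u := fun x' s u => (hc2 x').map_smul s u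
  intro x y z
  show a (R (rbProd b R lam x y)) z + a (rbProd b R lam x y) (R z)
        + lam • a (rbProd b R lam x y) z
      = c (R x) (rbProd d R lam y z) + c x (R (rbProd d R lam y z))
        + lam • c x (rbProd d R lam y z)
  rw [← hb, ← hd]
  show a (b (R x) (R y)) z
        + a (b (R x) y + b x (R y) + lam • b x y) (R z)
        + lam • a (b (R x) y + b x (R y) + lam • b x y) z
      = c (R x) (d (R y) z + d y (R z) + lam • d y z)
        + c x (d (R y) (R z))
        + lam • c x (d (R y) z + d y (R z) + lam • d y z)
  simp only [hA, hAs, hC, hCs, hax]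
  module

theorem rotaBaxter_triassoc {K A : Type*} [Field K] [AddCommGroup A] [Module K A]
    (l m r : A → A → A) (h : IsTriassoc K l m r) (R : A →ₗ[K] A) (lam : K)
    (hRl : ∀ x y, l (R x) (R y) = R (rbProd l R lam x y))
    (hRm : ∀ x y, m (R x) (R y) = R (rbProd m R lam x y))
    (hRr : ∀ x y, r (R x) (R y) = R (rbProd r R lam x y)) :
    IsTriassoc K (rbProd l R lam) (rbProd m R lam) (rbProd r R lam)
    ∧ (∀ x y, R (rbProd l R lam x y) = l (R x) (R y))
    ∧ (∀ x y, R (rbProd m R lam x y) = m (R x) (R y))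
    ∧ (∀ x y, R (rbProd r R lam x y) = r (R x) (R y))
    ∧ (∀ x y, rbProd l R lam (R x) (R y) = R (rbProd (rbProd l R lam) R lam x y))
    ∧ (∀ x y, rbProd m R lam (R x) (R y) = R (rbProd (rbProd m R lam) R lam x y))
    ∧ (∀ x y, rbProd r R lam (R x) (R y) = R (rbProd (rbProd r R lam) R lam x y)) := by
  have lin1 : ∀ (p : A → A → A), (∀ y, IsLinearMap K (fun x => p x y)) →
      ∀ y, IsLinearMap K (fun x => rbProd p R lam x y) := by
    intro p hp y
    have hA : ∀ u v y', p (u + v) y' = p u y' + p v y' := fun u v y' => (hp y').map_add u v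
    have hS : ∀ (s : K) u y', p (s • u) y' = s • p u y' := fun s u y' => (hp y').map_smul s u
    refine ⟨fun u v => ?_, fun s u => ?_⟩ <;>
      simp only [rbProd, map_add, map_smul, hA, hS] <;> module
  have lin2 : ∀ (p : A → A → A), (∀ x, IsLinearMap K (fun y => p x y)) →
      ∀ x, IsLinearMap K (fun y => rbProd p R lam x y) := by
    intro p hp x
    have hA : ∀ x' u v, p x' (u + v) = p x' u + p x' v := fun x' u v => (hp x').map_add u v
    have hS : ∀ x' (s : K) u, p x' (s • u) = s • p x' u := fun x' s u => (hp x').map_smul s u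
    refine ⟨fun u v => ?_, fun s u => ?_⟩ <;>
      simp only [rbProd, map_add, map_smul, hA, hS] <;> module
  have rbnew : ∀ (p : A → A → A), (∀ x y, p (R x) (R y) = R (rbProd p R lam x y)) →
      ∀ x y, rbProd p R lam (R x) (R y) = R (rbProd (rbProd p R lam) R lam x y) := by
    intro p hp x y
    show p (R (R x)) (R y) + p (R x) (R (R y)) + lam • p (R x) (R y)
        = R (rbProd p R lam (R x) y + rbProd p R lam x (R y) + lam • rbProd p R lam x y)
    rw [map_add, map_add, map_smul, ← hp, ← hp, ← hp]
  refine ⟨⟨lin1 l h.l_lin₁, lin2 l h.l_lin₂, lin1 m h.m_lin₁, lin2 m h.m_lin₂,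
      lin1 r h.r_lin₁, lin2 r h.r_lin₂,
      rb_key l l l l R lam h.l_lin₁ h.l_lin₂ hRl hRl h.ax1,
      rb_key r r r r R lam h.r_lin₁ h.r_lin₂ hRr hRr h.ax2,
      rb_key m m m m R lam h.m_lin₁ h.m_lin₂ hRm hRm h.ax3,
      rb_key l l l r R lam h.l_lin₁ h.l_lin₂ hRl hRr h.ax4,
      rb_key l l l m R lam h.l_lin₁ h.l_lin₂ hRl hRm h.ax5,
      rb_key l r r l R lam h.l_lin₁ h.r_lin₂ hRr hRl h.ax6,
      rb_key r l r r R lam h.r_lin₁ h.r_lin₂ hRl hRr h.ax7,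
      rb_key r m r r R lam h.r_lin₁ h.r_lin₂ hRm hRr h.ax8,
      rb_key l m m l R lam h.l_lin₁ h.m_lin₂ hRm hRl h.ax9,
      rb_key m l m r R lam h.m_lin₁ h.m_lin₂ hRl hRr h.ax10,
      rb_key m r r m R lam h.m_lin₁ h.r_lin₂ hRr hRm h.ax11⟩,
    fun x y => (hRl x y).symm, fun x y => (hRm x y).symm, fun x y => (hRr x y).symm,
    rbnew l hRl, rbnew m hRm, rbnew r hRr⟩
end

section
/- Let (A, ⊣, ⊥, ⊢) be a triassociative algebra over a field K and let N : A → A be a Nijenhuis operator on A. Define new products on A by x ◁ y = N(x) ⊣ y + x ⊣ N(y) − N(x ⊣ y), x △ y = N(x) ⊥ y + x ⊥ N(y) − N(x ⊥ y), and x ▷ y = N(x) ⊢ y + x ⊢ N(y) − N(x ⊢ y). Then (A, ◁, △, ▷) is a triassociative algebra; moreover N : (A, ◁, △, ▷) → (A, ⊣, ⊥, ⊢) is a morphism of triassociative algebras, and N is a Nijenhuis operator on (A, ◁, △, ▷). -/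
/-- The Nijenhuis deformed product: `x ◁ y = N(x)∗y + x∗N(y) − N(x∗y)`. -/
def nijProd {A : Type*} [AddCommGroup A]
    (mul : A → A → A) (N : A → A) : A → A → A :=
  fun x y => mul (N x) y + mul x (N y) - N (mul x y)

section NijAux
variable {K A : Type*} [Field K] [AddCommGroup A] [Module K A]

lemma nijLin₁ (P : A → A → A) (N : A →ₗ[K] A)
    (hP1 : ∀ c, IsLinearMap K (fun x => P x c)) (y : A) :
    IsLinearMap K (fun x => nijProd P N x y) := by
  have hadd : ∀ a b c, P (a + b) c = P a c + P b c := fun a b c => (hP1 c).map_add a b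
  have hsmul : ∀ (k : K) a c, P (k • a) c = k • P a c := fun k a c => (hP1 c).map_smul k a
  constructor <;> intros <;>
    simp only [nijProd, map_add, map_smul, hadd, hsmul, smul_add, smul_sub] <;> abel

lemma nijLin₂ (P : A → A → A) (N : A →ₗ[K] A)
    (hP2 : ∀ c, IsLinearMap K (fun y => P c y)) (x : A) :
    IsLinearMap K (fun y => nijProd P N x y) := by
  have hadd : ∀ c a b, P c (a + b) = P c a + P c b := fun c a b => (hP2 c).map_add a b
  have hsmul : ∀ c (k : K) a, P c (k • a) = k • P c a := fun c k a => (hP2 c).map_smul k a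
  constructor <;> intros <;>
    simp only [nijProd, map_add, map_smul, hadd, hsmul, smul_add, smul_sub] <;> abel

lemma nijKey (P Q R S : A → A → A) (N : A →ₗ[K] A)
    (hP1 : ∀ c, IsLinearMap K (fun x => P x c))
    (hR2 : ∀ c, IsLinearMap K (fun y => R c y))
    (hNP : ∀ x y, P (N x) (N y) = N (nijProd P N x y))
    (hNQ : ∀ x y, Q (N x) (N y) = N (nijProd Q N x y))
    (hNR : ∀ x y, R (N x) (N y) = N (nijProd R N x y))
    (hNS : ∀ x y, S (N x) (N y) = N (nijProd S N x y))
    (hax : ∀ x y z, P (Q x y) z = R x (S y z)) :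
    ∀ x y z, nijProd P N (nijProd Q N x y) z = nijProd R N x (nijProd S N y z) := by
  have Padd : ∀ a b c, P (a + b) c = P a c + P b c := fun a b c => (hP1 c).map_add a b
  have Psub : ∀ a b c, P (a - b) c = P a c - P b c := fun a b c => (hP1 c).map_sub a b
  have Radd : ∀ c a b, R c (a + b) = R c a + R c b := fun c a b => (hR2 c).map_add a b
  have Rsub : ∀ c a b, R c (a - b) = R c a - R c b := fun c a b => (hR2 c).map_sub a b
  intro x y z
  show P (N (nijProd Q N x y)) z + P (nijProd Q N x y) (N z) - N (P (nijProd Q N x y) z)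
      = R (N x) (nijProd S N y z) + R x (N (nijProd S N y z)) - N (R x (nijProd S N y z))
  rw [← hNQ x y, ← hNS y z]
  simp only [nijProd, Padd, Psub, Radd, Rsub, hax, hNP, hNR, map_add, map_sub]
  abel

lemma nijAgain (P : A → A → A) (N : A →ₗ[K] A)
    (hNP : ∀ x y, P (N x) (N y) = N (nijProd P N x y)) :
    ∀ x y, nijProd P N (N x) (N y) = N (nijProd (nijProd P N) N x y) := by
  intro x y
  show P (N (N x)) (N y) + P (N x) (N (N y)) - N (P (N x) (N y))
      = N (nijProd P N (N x) y + nijProd P N x (N y) - N (nijProd P N x y))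
  rw [hNP (N x) y, hNP x (N y), hNP x y, map_sub, map_add]

end NijAux

theorem nijenhuis_triassoc {K A : Type*} [Field K] [AddCommGroup A] [Module K A]
    (l m r : A → A → A) (h : IsTriassoc K l m r) (N : A →ₗ[K] A)
    (hNl : ∀ x y, l (N x) (N y) = N (nijProd l N x y))
    (hNm : ∀ x y, m (N x) (N y) = N (nijProd m N x y))
    (hNr : ∀ x y, r (N x) (N y) = N (nijProd r N x y)) :
    IsTriassoc K (nijProd l N) (nijProd m N) (nijProd r N)
    ∧ (∀ x y, N (nijProd l N x y) = l (N x) (N y))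
    ∧ (∀ x y, N (nijProd m N x y) = m (N x) (N y))
    ∧ (∀ x y, N (nijProd r N x y) = r (N x) (N y))
    ∧ (∀ x y, nijProd l N (N x) (N y) = N (nijProd (nijProd l N) N x y))
    ∧ (∀ x y, nijProd m N (N x) (N y) = N (nijProd (nijProd m N) N x y))
    ∧ (∀ x y, nijProd r N (N x) (N y) = N (nijProd (nijProd r N) N x y)) := by
  refine ⟨⟨nijLin₁ l N h.l_lin₁, nijLin₂ l N h.l_lin₂, nijLin₁ m N h.m_lin₁,
      nijLin₂ m N h.m_lin₂, nijLin₁ r N h.r_lin₁, nijLin₂ r N h.r_lin₂,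
      nijKey l l l l N h.l_lin₁ h.l_lin₂ hNl hNl hNl hNl h.ax1,
      nijKey r r r r N h.r_lin₁ h.r_lin₂ hNr hNr hNr hNr h.ax2,
      nijKey m m m m N h.m_lin₁ h.m_lin₂ hNm hNm hNm hNm h.ax3,
      nijKey l l l r N h.l_lin₁ h.l_lin₂ hNl hNl hNl hNr h.ax4,
      nijKey l l l m N h.l_lin₁ h.l_lin₂ hNl hNl hNl hNm h.ax5,
      nijKey l r r l N h.l_lin₁ h.r_lin₂ hNl hNr hNr hNl h.ax6,
      nijKey r l r r N h.r_lin₁ h.r_lin₂ hNr hNl hNr hNr h.ax7,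
      nijKey r m r r N h.r_lin₁ h.r_lin₂ hNr hNm hNr hNr h.ax8,
      nijKey l m m l N h.l_lin₁ h.m_lin₂ hNl hNm hNm hNl h.ax9,
      nijKey m l m r N h.m_lin₁ h.m_lin₂ hNm hNl hNm hNr h.ax10,
      nijKey m r r m N h.m_lin₁ h.r_lin₂ hNm hNr hNr hNm h.ax11⟩,
    fun x y => (hNl x y).symm, fun x y => (hNm x y).symm, fun x y => (hNr x y).symm,
    nijAgain l N hNl, nijAgain m N hNm, nijAgain r N hNr⟩
end

section
/- Let (A, ⊣, ⊥, ⊢) be a triassociative algebra over a field K and let P : A → A be a Reynolds operator on A. Define new products on A by x ◁ y = P(x) ⊣ y + x ⊣ P(y) − P(x) ⊣ P(y), x △ y = P(x) ⊥ y + x ⊥ P(y) − P(x) ⊥ P(y), and x ▷ y = P(x) ⊢ y + x ⊢ P(y) − P(x) ⊢ P(y). Then (A, ◁, △, ▷) is a triassociative algebra; moreover P : (A, ◁, △, ▷) → (A, ⊣, ⊥, ⊢) is a morphism of triassociative algebras, and P is a Reynolds operator on (A, ◁, △, ▷). -/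
/-- The Reynolds deformed product: `x ◁ y = P(x)∗y + x∗P(y) − P(x)∗P(y)`. -/
def reyProd {A : Type*} [AddCommGroup A]
    (mul : A → A → A) (P : A → A) : A → A → A :=
  fun x y => mul (P x) y + mul x (P y) - mul (P x) (P y)


section ReyAux
variable {K A : Type*} [Field K] [AddCommGroup A] [Module K A]

lemma rey_lin₁ (p : A → A → A) (P : A →ₗ[K] A)
    (h1 : ∀ y, IsLinearMap K fun x => p x y) (_h2 : ∀ x, IsLinearMap K fun y => p x y) :
    ∀ y, IsLinearMap K fun x => reyProd p P x y := by
  intro y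
  constructor
  · intro a b
    simp only [reyProd, map_add, (h1 _).map_add, ((_h2 _).map_add)]
    abel
  · intro c a
    simp only [reyProd, map_smul, (h1 _).map_smul, (_h2 _).map_smul, smul_add, smul_sub]

lemma rey_lin₂ (p : A → A → A) (P : A →ₗ[K] A)
    (_h1 : ∀ y, IsLinearMap K fun x => p x y) (h2 : ∀ x, IsLinearMap K fun y => p x y) :
    ∀ x, IsLinearMap K fun y => reyProd p P x y := by
  intro x
  constructor
  · intro a b
    simp only [reyProd, map_add, (_h1 _).map_add, (h2 _).map_add]
    abel
  · intro c a
    simp only [reyProd, map_smul, (_h1 _).map_smul, (h2 _).map_smul, smul_add, smul_sub]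

lemma rey_ax (p q s t : A → A → A) (P : A →ₗ[K] A)
    (hp : ∀ z, IsLinearMap K fun x => p x z) (hs : ∀ x, IsLinearMap K fun y => s x y)
    (hq : ∀ x y, q (P x) (P y) = P (reyProd q P x y))
    (ht : ∀ x y, t (P x) (P y) = P (reyProd t P x y))
    (hax : ∀ x y z, p (q x y) z = s x (t y z)) :
    ∀ x y z, reyProd p P (reyProd q P x y) z = reyProd s P x (reyProd t P y z) := by
  intro x y z
  simp only [reyProd] at *
  rw [← hq, ← ht]
  simp only [(hp _).map_add, (hp _).map_sub, (hs _).map_add, (hs _).map_sub, hax]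
  abel

end ReyAux

lemma rey_reynolds {K A : Type*} [Field K] [AddCommGroup A] [Module K A]
    (p : A → A → A) (P : A →ₗ[K] A)
    (hp : ∀ x y, p (P x) (P y) = P (reyProd p P x y)) :
    ∀ x y, reyProd p P (P x) (P y) = P (reyProd (reyProd p P) P x y) := by
  intro x y
  have e : reyProd (reyProd p ⇑P) (⇑P) x y
      = reyProd p ⇑P (P x) y + reyProd p ⇑P x (P y) - reyProd p ⇑P (P x) (P y) := rfl
  rw [e, map_sub, map_add, ← hp, ← hp, ← hp]
  rfl

theorem reynolds_triassoc {K A : Type*} [Field K] [AddCommGroup A] [Module K A]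
    (l m r : A → A → A) (h : IsTriassoc K l m r) (P : A →ₗ[K] A)
    (hPl : ∀ x y, l (P x) (P y) = P (reyProd l P x y))
    (hPm : ∀ x y, m (P x) (P y) = P (reyProd m P x y))
    (hPr : ∀ x y, r (P x) (P y) = P (reyProd r P x y)) :
    IsTriassoc K (reyProd l P) (reyProd m P) (reyProd r P)
    ∧ (∀ x y, P (reyProd l P x y) = l (P x) (P y))
    ∧ (∀ x y, P (reyProd m P x y) = m (P x) (P y))
    ∧ (∀ x y, P (reyProd r P x y) = r (P x) (P y))
    ∧ (∀ x y, reyProd l P (P x) (P y) = P (reyProd (reyProd l P) P x y))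
    ∧ (∀ x y, reyProd m P (P x) (P y) = P (reyProd (reyProd m P) P x y))
    ∧ (∀ x y, reyProd r P (P x) (P y) = P (reyProd (reyProd r P) P x y)) := by
  obtain ⟨ll1, ll2, ml1, ml2, rl1, rl2, a1, a2, a3, a4, a5, a6, a7, a8, a9, a10, a11⟩ := h
  refine ⟨⟨rey_lin₁ l P ll1 ll2, rey_lin₂ l P ll1 ll2, rey_lin₁ m P ml1 ml2,
      rey_lin₂ m P ml1 ml2, rey_lin₁ r P rl1 rl2, rey_lin₂ r P rl1 rl2,
      rey_ax l l l l P ll1 ll2 hPl hPl a1,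
      rey_ax r r r r P rl1 rl2 hPr hPr a2,
      rey_ax m m m m P ml1 ml2 hPm hPm a3,
      rey_ax l l l r P ll1 ll2 hPl hPr a4,
      rey_ax l l l m P ll1 ll2 hPl hPm a5,
      rey_ax l r r l P ll1 rl2 hPr hPl a6,
      rey_ax r l r r P rl1 rl2 hPl hPr a7,
      rey_ax r m r r P rl1 rl2 hPm hPr a8,
      rey_ax l m m l P ll1 ml2 hPm hPl a9,
      rey_ax m l m r P ml1 ml2 hPl hPr a10,
      rey_ax m r r m P ml1 rl2 hPr hPm a11⟩,
    fun x y => (hPl x y).symm, fun x y => (hPm x y).symm, fun x y => (hPr x y).symm,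
    rey_reynolds l P hPl, rey_reynolds m P hPm, rey_reynolds r P hPr⟩
end

section
/- Let (A, ⊣, ⊥, ⊢) be a triassociative algebra over a field K and let θ : A → A be an element of centroid on A. Then A, equipped with the products x ◁ y = θ(x) ⊣ y, x △ y = θ(x) ⊥ y, x ▷ y = θ(x) ⊢ y, is again a triassociative algebra. -/
theorem centroid_triassoc {K A : Type*} [Field K] [AddCommGroup A] [Module K A]
    (l m r : A → A → A) (h : IsTriassoc K l m r) (θ : A →ₗ[K] A)
    (hl : ∀ x y, θ (l x y) = l (θ x) y ∧ θ (l x y) = l x (θ y))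
    (hm : ∀ x y, θ (m x y) = m (θ x) y ∧ θ (m x y) = m x (θ y))
    (hr : ∀ x y, θ (r x y) = r (θ x) y ∧ θ (r x y) = r x (θ y)) :
    IsTriassoc K (fun x y => l (θ x) y) (fun x y => m (θ x) y) (fun x y => r (θ x) y) := by
  have hl2 : ∀ x y, θ (l x y) = l x (θ y) := fun x y => (hl x y).2
  have hm2 : ∀ x y, θ (m x y) = m x (θ y) := fun x y => (hm x y).2
  have hr2 : ∀ x y, θ (r x y) = r x (θ y) := fun x y => (hr x y).2
  constructor
  · intro y
    exact ⟨fun a b => by simp only [map_add, (h.l_lin₁ y).map_add],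
           fun c a => by simp only [map_smul, (h.l_lin₁ y).map_smul]⟩
  · intro x; exact h.l_lin₂ (θ x)
  · intro y
    exact ⟨fun a b => by simp only [map_add, (h.m_lin₁ y).map_add],
           fun c a => by simp only [map_smul, (h.m_lin₁ y).map_smul]⟩
  · intro x; exact h.m_lin₂ (θ x)
  · intro y
    exact ⟨fun a b => by simp only [map_add, (h.r_lin₁ y).map_add],
           fun c a => by simp only [map_smul, (h.r_lin₁ y).map_smul]⟩
  · intro x; exact h.r_lin₂ (θ x)
  all_goals intro x y z
  · rw [hl2]; exact h.ax1 (θ x) (θ y) z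
  · rw [hr2]; exact h.ax2 (θ x) (θ y) z
  · rw [hm2]; exact h.ax3 (θ x) (θ y) z
  · rw [hl2]; exact h.ax4 (θ x) (θ y) z
  · rw [hl2]; exact h.ax5 (θ x) (θ y) z
  · rw [hr2]; exact h.ax6 (θ x) (θ y) z
  · rw [hl2]; exact h.ax7 (θ x) (θ y) z
  · rw [hm2]; exact h.ax8 (θ x) (θ y) z
  · rw [hm2]; exact h.ax9 (θ x) (θ y) z
  · rw [hl2]; exact h.ax10 (θ x) (θ y) z
  · rw [hr2]; exact h.ax11 (θ x) (θ y) z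
end

section
/- Let (A, ⊣, ⊥, ⊢) be a triassociative algebra over a field K and let β : A → A be an injective averaging operator on A. Then A, equipped with the products x ◁ y = β(x) ⊣ y, x △ y = β(x) ⊥ y, x ▷ y = β(x) ⊢ y, is again a triassociative algebra. -/
theorem averaging_triassoc {K A : Type*} [Field K] [AddCommGroup A] [Module K A]
    (l m r : A → A → A) (h : IsTriassoc K l m r) (β : A →ₗ[K] A)
    (hinj : Function.Injective β)
    (hl : ∀ x y, l (β x) (β y) = β (l (β x) y) ∧ l (β x) (β y) = β (l x (β y)))
    (hm : ∀ x y, m (β x) (β y) = β (m (β x) y) ∧ m (β x) (β y) = β (m x (β y)))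
    (hr : ∀ x y, r (β x) (β y) = β (r (β x) y) ∧ r (β x) (β y) = β (r x (β y))) :
    IsTriassoc K (fun x y => l (β x) y) (fun x y => m (β x) y) (fun x y => r (β x) y) := by
  constructor
  · intro y
    exact ⟨fun a b => by simp [β.map_add, (h.l_lin₁ y).map_add],
           fun c a => by simp [β.map_smul, (h.l_lin₁ y).map_smul]⟩
  · intro x; exact h.l_lin₂ (β x)
  · intro y
    exact ⟨fun a b => by simp [β.map_add, (h.m_lin₁ y).map_add],
           fun c a => by simp [β.map_smul, (h.m_lin₁ y).map_smul]⟩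
  · intro x; exact h.m_lin₂ (β x)
  · intro y
    exact ⟨fun a b => by simp [β.map_add, (h.r_lin₁ y).map_add],
           fun c a => by simp [β.map_smul, (h.r_lin₁ y).map_smul]⟩
  · intro x; exact h.r_lin₂ (β x)
  · intro x y z; rw [← (hl x y).1, h.ax1]
  · intro x y z; rw [← (hr x y).1, h.ax2]
  · intro x y z; rw [← (hm x y).1, h.ax3]
  · intro x y z; rw [← (hl x y).1, h.ax4]
  · intro x y z; rw [← (hl x y).1, h.ax5]
  · intro x y z; rw [← (hr x y).1, h.ax6]
  · intro x y z; rw [← (hl x y).1, h.ax7]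
  · intro x y z; rw [← (hm x y).1, h.ax8]
  · intro x y z; rw [← (hm x y).1, h.ax9]
  · intro x y z; rw [← (hl x y).1, h.ax10]
  · intro x y z; rw [← (hr x y).1, h.ax11]
end

section
/- Let (L, [-,-,-]) be a (right) ternary Leibniz algebra over a field K and let N : L → L be a Nijenhuis operator on L. Define a new trilinear bracket by [x,y,z]_N = [N(x),N(y),z] + [N(x),y,N(z)] + [x,N(y),N(z)] − N([N(x),y,z] + [x,y,N(z)] + [x,N(y),z]) + N²([x,y,z]). Then: (1) (L, [-,-,-]_N) is a (right) ternary Leibniz algebra; (2) N is a morphism of ternary Leibniz algebras from (L, [-,-,-]_N) to (L, [-,-,-]); (3) N is a Nijenhuis operator on (L, [-,-,-]_N). -/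
structure IsTernaryLeibnizR (K : Type*) [Field K] {L : Type*} [AddCommGroup L] [Module K L]
    (b : L → L → L → L) : Prop where
  lin₁ : ∀ y z, IsLinearMap K (fun x => b x y z)
  lin₂ : ∀ x z, IsLinearMap K (fun y => b x y z)
  lin₃ : ∀ x y, IsLinearMap K (fun z => b x y z)
  leib : ∀ x y z t u,
    b (b x y z) t u = b x y (b z t u) + b x (b y t u) z + b (b x t u) y z

/-- The Nijenhuis deformed ternary bracket. -/
def nijBracket {L : Type*} [AddCommGroup L] (b : L → L → L → L) (N : L → L) :
    L → L → L → L :=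
  fun x y z =>
    b (N x) (N y) z + b (N x) y (N z) + b x (N y) (N z)
      - N (b (N x) y z + b x y (N z) + b x (N y) z) + N (N (b x y z))

theorem nijenhuis_ternaryLeibniz {K L : Type*} [Field K] [AddCommGroup L] [Module K L]
    (b : L → L → L → L) (h : IsTernaryLeibnizR K b) (N : L →ₗ[K] L)
    (hN : ∀ x y z, b (N x) (N y) (N z)
      = N (b (N x) (N y) z + b (N x) y (N z) + b x (N y) (N z)
          - N (b (N x) y z + b x (N y) z + b x y (N z)) + N (N (b x y z)))) :
    IsTernaryLeibnizR K (nijBracket b N)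
    ∧ (∀ x y z, N (nijBracket b N x y z) = b (N x) (N y) (N z))
    ∧ (∀ x y z, nijBracket b N (N x) (N y) (N z)
      = N (nijBracket b N (N x) (N y) z + nijBracket b N (N x) y (N z)
            + nijBracket b N x (N y) (N z)
          - N (nijBracket b N (N x) y z + nijBracket b N x (N y) z
                + nijBracket b N x y (N z))
          + N (N (nijBracket b N x y z)))) := by
  have ba1 : ∀ a c p q, b (a + c) p q = b a p q + b c p q :=
    fun a c p q => (h.lin₁ p q).map_add a c
  have ba2 : ∀ a c p q, b p (a + c) q = b p a q + b p c q :=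
    fun a c p q => (h.lin₂ p q).map_add a c
  have ba3 : ∀ a c p q, b p q (a + c) = b p q a + b p q c :=
    fun a c p q => (h.lin₃ p q).map_add a c
  have bs1 : ∀ a c p q, b (a - c) p q = b a p q - b c p q :=
    fun a c p q => (IsLinearMap.mk' _ (h.lin₁ p q)).map_sub a c
  have bs2 : ∀ a c p q, b p (a - c) q = b p a q - b p c q :=
    fun a c p q => (IsLinearMap.mk' _ (h.lin₂ p q)).map_sub a c
  have bs3 : ∀ a c p q, b p q (a - c) = b p q a - b p q c :=
    fun a c p q => (IsLinearMap.mk' _ (h.lin₃ p q)).map_sub a c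
  have bm1 : ∀ (r : K) a p q, b (r • a) p q = r • b a p q :=
    fun r a p q => (h.lin₁ p q).map_smul r a
  have bm2 : ∀ (r : K) a p q, b p (r • a) q = r • b p a q :=
    fun r a p q => (h.lin₂ p q).map_smul r a
  have bm3 : ∀ (r : K) a p q, b p q (r • a) = r • b p q a :=
    fun r a p q => (h.lin₃ p q).map_smul r a
  have m2 : ∀ x y z, N (nijBracket b N x y z) = b (N x) (N y) (N z) := by
    intro x y z
    rw [hN x y z]
    simp only [nijBracket]
    exact congrArg (⇑N) (by abel)
  refine ⟨⟨?_, ?_, ?_, ?_⟩, m2, ?_⟩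
  · intro p q
    constructor
    · intro a c
      simp only [nijBracket, map_add, ba1, ba2, ba3]
      abel
    · intro r a
      simp only [nijBracket, map_smul, map_add, bm1, bm2, bm3, smul_add, smul_sub]
  · intro p q
    constructor
    · intro a c
      simp only [nijBracket, map_add, ba1, ba2, ba3]
      abel
    · intro r a
      simp only [nijBracket, map_smul, map_add, bm1, bm2, bm3, smul_add, smul_sub]
  · intro p q
    constructor
    · intro a c
      simp only [nijBracket, map_add, ba1, ba2, ba3]
      abel
    · intro r a
      simp only [nijBracket, map_smul, map_add, bm1, bm2, bm3, smul_add, smul_sub]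
  · intro x y z t u
    have e0 := congrArg (fun w => (N (N w))) (h.leib (N x) (N y) z t u)
    have e1 := congrArg (fun w => (N (N w))) (h.leib (N x) y (N z) t u)
    have e2 := congrArg (fun w => (N (N w))) (h.leib (N x) y z (N t) u)
    have e3 := congrArg (fun w => (N (N w))) (h.leib (N x) y z t (N u))
    have e4 := congrArg (fun w => (N (N w))) (h.leib x (N y) (N z) t u)
    have e5 := congrArg (fun w => (N (N w))) (h.leib x (N y) z (N t) u)
    have e6 := congrArg (fun w => (N (N w))) (h.leib x (N y) z t (N u))
    have e7 := congrArg (fun w => (N (N w))) (h.leib x y (N z) (N t) u)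
    have e8 := congrArg (fun w => (N (N w))) (h.leib x y (N z) t (N u))
    have e9 := congrArg (fun w => (N (N w))) (h.leib x y z (N t) (N u))
    have e10 := congrArg (fun w => (N (N (N w)))) (h.leib (N x) y z t u)
    have e11 := congrArg (fun w => (N (N (N w)))) (h.leib x (N y) z t u)
    have e12 := congrArg (fun w => (N (N (N w)))) (h.leib x y (N z) t u)
    have e13 := congrArg (fun w => (N (N (N w)))) (h.leib x y z (N t) u)
    have e14 := congrArg (fun w => (N (N (N w)))) (h.leib x y z t (N u))
    have e15 := congrArg (fun w => (N (N (N (N w))))) (h.leib x y z t u)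
    have e16 := congrArg (fun w => (N (b w t u))) (hN x y z)
    have e17 := congrArg (fun w => (N (b w y z))) (hN x t u)
    have e18 := congrArg (fun w => (N (b x w z))) (hN y t u)
    have e19 := congrArg (fun w => (N (b x y w))) (hN z t u)
    have e20 := congrArg (fun w => (N w)) (hN (b x t u) y z)
    have e21 := congrArg (fun w => (N w)) (hN (b x y z) t u)
    have e22 := congrArg (fun w => (N w)) (hN x (b y t u) z)
    have e23 := congrArg (fun w => (N w)) (hN x y (b z t u))
    have e24 := congrArg (fun w => (N w)) (h.leib (N x) (N y) (N z) t u)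
    have e25 := congrArg (fun w => (N w)) (h.leib (N x) (N y) z (N t) u)
    have e26 := congrArg (fun w => (N w)) (h.leib (N x) (N y) z t (N u))
    have e27 := congrArg (fun w => (N w)) (h.leib (N x) y (N z) (N t) u)
    have e28 := congrArg (fun w => (N w)) (h.leib (N x) y (N z) t (N u))
    have e29 := congrArg (fun w => (N w)) (h.leib (N x) y z (N t) (N u))
    have e30 := congrArg (fun w => (N w)) (h.leib x (N y) (N z) (N t) u)
    have e31 := congrArg (fun w => (N w)) (h.leib x (N y) (N z) t (N u))
    have e32 := congrArg (fun w => (N w)) (h.leib x (N y) z (N t) (N u))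
    have e33 := congrArg (fun w => (N w)) (h.leib x y (N z) (N t) (N u))
    have e34 := congrArg (fun w => (b w (N t) u)) (hN x y z)
    have e35 := congrArg (fun w => (b w (N y) z)) (hN x t u)
    have e36 := congrArg (fun w => (b w t (N u))) (hN x y z)
    have e37 := congrArg (fun w => (b w y (N z))) (hN x t u)
    have e38 := congrArg (fun w => (b (N x) w z)) (hN y t u)
    have e39 := congrArg (fun w => (b x w (N z))) (hN y t u)
    have e40 := congrArg (fun w => (b (N x) y w)) (hN z t u)
    have e41 := congrArg (fun w => (b x (N y) w)) (hN z t u)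
    have e42 := hN (N (b x t u)) y z
    have e43 := hN (N (b x y z)) t u
    have e44 := hN (b (N x) t u) y z
    have e45 := hN (b (N x) y z) t u
    have e46 := hN (b x (N t) u) y z
    have e47 := hN (b x (N y) z) t u
    have e48 := hN (b x t (N u)) y z
    have e49 := hN (b x y (N z)) t u
    have e50 := hN x (N (b y t u)) z
    have e51 := hN x (b (N y) t u) z
    have e52 := hN x (b y (N t) u) z
    have e53 := hN x (b y t (N u)) z
    have e54 := hN x y (N (b z t u))
    have e55 := hN x y (b (N z) t u)
    have e56 := hN x y (b z (N t) u)
    have e57 := hN x y (b z t (N u))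
    have e58 := h.leib (N x) (N y) (N z) (N t) u
    have e59 := h.leib (N x) (N y) (N z) t (N u)
    have e60 := h.leib (N x) (N y) z (N t) (N u)
    have e61 := h.leib (N x) y (N z) (N t) (N u)
    have e62 := h.leib x (N y) (N z) (N t) (N u)
    linear_combination (norm := (simp only [nijBracket, map_add, map_sub, ba1, ba2, ba3, bs1, bs2, bs3]; abel)) e0 + e1 + e2 + e3 + e4 + e5 + e6 + e7 + e8 + e9 - e10 - e11 - e12 - e13 - e14 + e15 + e16 - e17 - e18 - e19 - e20 + e21 - e22 - e23 - e24 - e25 - e26 - e27 - e28 - e29 - e30 - e31 - e32 - e33 - e34 + e35 - e36 + e37 + e38 + e39 + e40 + e41 - e42 + e43 + e44 - e45 + e46 - e47 + e48 - e49 - e50 + e51 + e52 + e53 - e54 + e55 + e56 + e57 + e58 + e59 + e60 + e61 + e62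
  · intro x y z
    simp only [map_add, map_sub, m2]
    simp only [nijBracket, map_add, map_sub]
    abel
end

section
/- Let (L, [-,-,-]) be a (right) ternary Leibniz algebra over a field K and let R : L → L be a Rota–Baxter operator of weight λ ∈ K on L. Then L with the bracket [x,y,z]_R = [R(x),R(y),z] + [R(x),y,R(z)] + [x,R(y),R(z)] + λ[R(x),y,z] + λ[x,R(y),z] + λ[x,y,R(z)] + λ²[x,y,z] is again a (right) ternary Leibniz algebra. -/
/-- The Rota–Baxter deformed ternary bracket of weight `λ`. -/
def rbBracket {K L : Type*} [Field K] [AddCommGroup L] [Module K L]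
    (b : L → L → L → L) (R : L → L) (lam : K) : L → L → L → L :=
  fun x y z =>
    b (R x) (R y) z + b (R x) y (R z) + b x (R y) (R z)
      + lam • b (R x) y z + lam • b x (R y) z + lam • b x y (R z)
      + (lam ^ 2) • b x y z

theorem rotaBaxter_ternaryLeibniz {K L : Type*} [Field K] [AddCommGroup L] [Module K L]
    (b : L → L → L → L) (h : IsTernaryLeibnizR K b) (R : L →ₗ[K] L) (lam : K)
    (hR : ∀ x y z, b (R x) (R y) (R z) = R (rbBracket b R lam x y z)) :
    IsTernaryLeibnizR K (rbBracket b R lam) := by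
  have ba1 : ∀ (x x' y z : L), b (x + x') y z = b x y z + b x' y z :=
    fun x x' y z => (h.lin₁ y z).map_add x x'
  have ba2 : ∀ (x y y' z : L), b x (y + y') z = b x y z + b x y' z :=
    fun x y y' z => (h.lin₂ x z).map_add y y'
  have ba3 : ∀ (x y z z' : L), b x y (z + z') = b x y z + b x y z' :=
    fun x y z z' => (h.lin₃ x y).map_add z z'
  have bs1 : ∀ (a : K) (x y z : L), b (a • x) y z = a • b x y z :=
    fun a x y z => (h.lin₁ y z).map_smul a x
  have bs2 : ∀ (a : K) (x y z : L), b x (a • y) z = a • b x y z :=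
    fun a x y z => (h.lin₂ x z).map_smul a y
  have bs3 : ∀ (a : K) (x y z : L), b x y (a • z) = a • b x y z :=
    fun a x y z => (h.lin₃ x y).map_smul a z
  have hR' : ∀ x y z : L,
      R (b (R x) (R y) z + b (R x) y (R z) + b x (R y) (R z)
        + lam • b (R x) y z + lam • b x (R y) z + lam • b x y (R z)
        + (lam ^ 2) • b x y z) = b (R x) (R y) (R z) := by
    intro x y z
    simpa only [rbBracket] using (hR x y z).symm
  obtain ⟨c, hcb⟩ : ∃ c : L → L → L → L, c = b := ⟨b, rfl⟩
  have leibC : ∀ x y z t u : L,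
      b (b x y z) t u = c x y (b z t u) + c x (b y t u) z + c (b x t u) y z := by
    intro x y z t u; rw [hcb]; exact h.leib x y z t u
  refine ⟨fun y z => ⟨fun a a' => ?_, fun k a => ?_⟩,
          fun x z => ⟨fun a a' => ?_, fun k a => ?_⟩,
          fun x y => ⟨fun a a' => ?_, fun k a => ?_⟩, fun x y z t u => ?_⟩
  · simp only [rbBracket, map_add, ba1, ba2, ba3]; module
  · simp only [rbBracket, map_smul, bs1, bs2, bs3]; module
  · simp only [rbBracket, map_add, ba1, ba2, ba3]; module
  · simp only [rbBracket, map_smul, bs1, bs2, bs3]; module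
  · simp only [rbBracket, map_add, ba1, ba2, ba3]; module
  · simp only [rbBracket, map_smul, bs1, bs2, bs3]; module
  · simp only [rbBracket]
    simp only [hR']
    simp only [ba1, ba2, ba3, bs1, bs2, bs3]
    conv_lhs => simp only [leibC]
    simp only [hcb]
    module
end

section
/- Let (L, [-,-]) be a (right) Leibniz algebra over a field K and let R : L → L be a Rota–Baxter operator of weight λ ∈ K on L. Then L with the bracket [x,y]_R = [R(x),y] + [x,R(y)] + λ[x,y] is again a (right) Leibniz algebra, and R is a morphism of Leibniz algebras from (L, [-,-]_R) to (L, [-,-]). -/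
structure IsLeibnizR (K : Type*) [Field K] {L : Type*} [AddCommGroup L] [Module K L]
    (b : L → L → L) : Prop where
  lin₁ : ∀ y, IsLinearMap K (fun x => b x y)
  lin₂ : ∀ x, IsLinearMap K (fun y => b x y)
  leib : ∀ x y z, b (b x y) z = b x (b y z) + b (b x z) y

/-- The Rota–Baxter deformed binary bracket of weight `λ`. -/
def rbBin {K L : Type*} [Field K] [AddCommGroup L] [Module K L]
    (b : L → L → L) (R : L → L) (lam : K) : L → L → L :=
  fun x y => b (R x) y + b x (R y) + lam • b x y

theorem rotaBaxter_leibniz {K L : Type*} [Field K] [AddCommGroup L] [Module K L]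
    (b : L → L → L) (h : IsLeibnizR K b) (R : L →ₗ[K] L) (lam : K)
    (hR : ∀ x y, b (R x) (R y) = R (rbBin b R lam x y)) :
    IsLeibnizR K (rbBin b R lam)
    ∧ (∀ x y, R (rbBin b R lam x y) = b (R x) (R y)) := by
  have ba1 : ∀ x x' y, b (x + x') y = b x y + b x' y := fun x x' y => (h.lin₁ y).map_add x x'
  have bs1 : ∀ (c : K) x y, b (c • x) y = c • b x y := fun c x y => (h.lin₁ y).map_smul c x
  have ba2 : ∀ x y y', b x (y + y') = b x y + b x y' := fun x y y' => (h.lin₂ x).map_add y y'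
  have bs2 : ∀ (c : K) x y, b x (c • y) = c • b x y := fun c x y => (h.lin₂ x).map_smul c y
  have hR' : ∀ x y, R (b (R x) y + b x (R y) + lam • b x y) = b (R x) (R y) :=
    fun x y => (hR x y).symm
  refine ⟨⟨?_, ?_, ?_⟩, fun x y => (hR x y).symm⟩
  · intro y
    constructor
    · intro x x'
      simp only [rbBin, map_add, ba1, ba2, smul_add]
      abel
    · intro c x
      simp only [rbBin, map_smul, bs1, bs2, smul_add]
      module
  · intro x
    constructor
    · intro y y'
      simp only [rbBin, map_add, ba1, ba2, smul_add]
      abel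
    · intro c y
      simp only [rbBin, map_smul, bs1, bs2, smul_add]
      module
  · intro x y z
    simp only [rbBin, map_add, map_smul, hR', ba1, ba2, bs1, bs2, smul_add]
    rw [h.leib (R x) (R y) z, h.leib (R x) y (R z), h.leib x (R y) (R z),
      h.leib x y (R z), h.leib (R x) y z, h.leib x (R y) z, h.leib x y z]
    module
end

section
/- Let (L, [-,-]) be a (right) Leibniz algebra over a field K and let R : L → L be a Rota–Baxter operator of weight λ ∈ K on L. For x,y,z ∈ L let [x,y]_R = [R(x),y] + [x,R(y)] + λ[x,y] and let {x,y,z} = [x,[y,z]]. Then for all x,y,z ∈ L one has [x, [y,z]_R]_R = {R(x),R(y),z} + {R(x),y,R(z)} + {x,R(y),R(z)} + λ{R(x),y,z} + λ{x,R(y),z} + λ{x,y,R(z)} + λ²{x,y,z}; that is, the ternary bracket associated to the Rota–Baxter deformed Leibniz algebra (L, [-,-]_R) coincides with the Rota–Baxter deformation (by R and λ) of the ternary bracket {-,-,-} associated to (L, [-,-]). -/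
theorem ternary_of_rb_eq_rb_of_ternary {K L : Type*} [Field K] [AddCommGroup L] [Module K L]
    (b : L → L → L) (h : IsLeibnizR K b) (R : L →ₗ[K] L) (lam : K)
    (hR : ∀ x y, b (R x) (R y) = R (b (R x) y + b x (R y) + lam • b x y)) :
    ∀ x y z,
      (fun u v => b (R u) v + b u (R v) + lam • b u v) x
          ((fun u v => b (R u) v + b u (R v) + lam • b u v) y z)
        = b (R x) (b (R y) z) + b (R x) (b y (R z)) + b x (b (R y) (R z))
          + lam • b (R x) (b y z) + lam • b x (b (R y) z) + lam • b x (b y (R z))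
          + (lam ^ 2) • b x (b y z) := by
  intro x y z
  simp only
  rw [← hR y z]
  have l2 := h.lin₂
  rw [(l2 (R x)).map_add, (l2 (R x)).map_add, (l2 (R x)).map_smul,
      (l2 x).map_add, (l2 x).map_add, (l2 x).map_smul,
      smul_add, smul_add, smul_smul, ← pow_two]
  abel
end

section
/- Let (A, ⊣, ⊥, ⊢) be a triassociative algebra over a field K. Then A with the trilinear bracket [x,y,z] := x ⊣ (y ⊥ z − z ⊥ y) − (y ⊥ z − z ⊥ y) ⊢ x is a (right) ternary Leibniz algebra. -/
theorem triassoc_to_ternaryLeibniz {K A : Type*} [Field K] [AddCommGroup A] [Module K A]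
    (l m r : A → A → A) (h : IsTriassoc K l m r) :
    IsTernaryLeibnizR K (fun x y z => l x (m y z - m z y) - r (m y z - m z y) x) := by
  have lsub₁ : ∀ x y z, l (x - y) z = l x z - l y z :=
    fun x y z => (IsLinearMap.mk' _ (h.l_lin₁ z)).map_sub x y
  have lsub₂ : ∀ x y z, l x (y - z) = l x y - l x z :=
    fun x y z => (IsLinearMap.mk' _ (h.l_lin₂ x)).map_sub y z
  have msub₁ : ∀ x y z, m (x - y) z = m x z - m y z :=
    fun x y z => (IsLinearMap.mk' _ (h.m_lin₁ z)).map_sub x y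
  have msub₂ : ∀ x y z, m x (y - z) = m x y - m x z :=
    fun x y z => (IsLinearMap.mk' _ (h.m_lin₂ x)).map_sub y z
  have rsub₁ : ∀ x y z, r (x - y) z = r x z - r y z :=
    fun x y z => (IsLinearMap.mk' _ (h.r_lin₁ z)).map_sub x y
  have rsub₂ : ∀ x y z, r x (y - z) = r x y - r x z :=
    fun x y z => (IsLinearMap.mk' _ (h.r_lin₂ x)).map_sub y z
  have e1 : ∀ x y z, l x (r y z) = l x (l y z) := by
    intro x y z; rw [← h.ax4, h.ax1]
  have e2 : ∀ x y z, l x (m y z) = l x (l y z) := by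
    intro x y z; rw [← h.ax5, h.ax1]
  constructor
  · intro y z
    constructor
    · intro x₁ x₂
      simp only [(h.l_lin₁ _).map_add, (h.r_lin₂ _).map_add]
      abel
    · intro c x
      simp only [(h.l_lin₁ _).map_smul, (h.r_lin₂ _).map_smul, smul_sub]
  · intro x z
    constructor
    · intro y₁ y₂
      have key : ∀ a b c d : A, a + b - (c + d) = (a - c) + (b - d) := by intros; abel
      simp only [(h.m_lin₁ _).map_add, (h.m_lin₂ _).map_add, key,
        (h.l_lin₂ _).map_add, (h.r_lin₁ _).map_add]
    · intro c y
      simp only [(h.m_lin₁ _).map_smul, (h.m_lin₂ _).map_smul]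
      rw [show ∀ a b : A, c • a - c • b = c • (a - b) from fun a b => (smul_sub c a b).symm,
        (h.l_lin₂ x).map_smul, (h.r_lin₁ x).map_smul, smul_sub]
  · intro x y
    constructor
    · intro z₁ z₂
      have key : ∀ a b c d : A, a + b - (c + d) = (a - c) + (b - d) := by intros; abel
      simp only [(h.m_lin₁ _).map_add, (h.m_lin₂ _).map_add, key,
        (h.l_lin₂ _).map_add, (h.r_lin₁ _).map_add]
    · intro c z
      simp only [(h.m_lin₁ _).map_smul, (h.m_lin₂ _).map_smul]
      rw [show ∀ a b : A, c • a - c • b = c • (a - b) from fun a b => (smul_sub c a b).symm,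
        (h.l_lin₂ x).map_smul, (h.r_lin₁ x).map_smul, smul_sub]
  · intro x y z t u
    simp only [lsub₁, lsub₂, msub₁, msub₂, rsub₁, rsub₂,
      h.ax1, h.ax2, h.ax3, h.ax6, h.ax7, h.ax8, h.ax9, h.ax10, h.ax11, e1, e2]
    abel
end

section
/- Let (A, ⊣, ⊥, ⊢) be a triassociative algebra over a field K. Then A with the trilinear bracket [x,y,z]₁ := x ⊣ (y ⊥ z) − (y ⊥ z) ⊢ x is a (right) ternary Leibniz algebra. -/
theorem triassoc_to_ternaryLeibniz₁ {K A : Type*} [Field K] [AddCommGroup A] [Module K A]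
    (l m r : A → A → A) (h : IsTriassoc K l m r) :
    IsTernaryLeibnizR K (fun x y z => l x (m y z) - r (m y z) x) := by
  have lsub1 : ∀ a b c, l (a - b) c = l a c - l b c := fun a b c => (h.l_lin₁ c).map_sub a b
  have lsub2 : ∀ a b c, l a (b - c) = l a b - l a c := fun a b c => (h.l_lin₂ a).map_sub b c
  have msub1 : ∀ a b c, m (a - b) c = m a c - m b c := fun a b c => (h.m_lin₁ c).map_sub a b
  have msub2 : ∀ a b c, m a (b - c) = m a b - m a c := fun a b c => (h.m_lin₂ a).map_sub b c
  have rsub1 : ∀ a b c, r (a - b) c = r a c - r b c := fun a b c => (h.r_lin₁ c).map_sub a b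
  have rsub2 : ∀ a b c, r a (b - c) = r a b - r a c := fun a b c => (h.r_lin₂ a).map_sub b c
  constructor
  · intro y z
    exact ⟨fun a b => by
        simp only [(h.l_lin₁ (m y z)).map_add, (h.r_lin₂ (m y z)).map_add]; abel,
      fun c a => by
        simp only [(h.l_lin₁ (m y z)).map_smul, (h.r_lin₂ (m y z)).map_smul, smul_sub]⟩
  · intro x z
    exact ⟨fun a b => by
        simp only [(h.m_lin₁ z).map_add, (h.l_lin₂ x).map_add, (h.r_lin₁ x).map_add]; abel,
      fun c a => by
        simp only [(h.m_lin₁ z).map_smul, (h.l_lin₂ x).map_smul, (h.r_lin₁ x).map_smul,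
          smul_sub]⟩
  · intro x y
    exact ⟨fun a b => by
        simp only [(h.m_lin₂ y).map_add, (h.l_lin₂ x).map_add, (h.r_lin₁ x).map_add]; abel,
      fun c a => by
        simp only [(h.m_lin₂ y).map_smul, (h.l_lin₂ x).map_smul, (h.r_lin₁ x).map_smul,
          smul_sub]⟩
  · intro x y z t u
    simp only [lsub1, lsub2, msub1, msub2, rsub1, rsub2]
    rw [h.ax1 x (m y z) (m t u), h.ax6 (m y z) x (m t u), ← h.ax9 y z (m t u),
      ← h.ax10 y (m t u) z, h.ax11 (m t u) y z, ← h.ax4 x (m t u) (m y z),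
      h.ax7 (m y z) (m t u) x, h.ax2 (m t u) (m y z) x, h.ax6 (m t u) x (m y z)]
    abel
end

section
/- Let (A, ⊣, ⊥, ⊢) be a triassociative algebra over a field K. Then A with the trilinear bracket [x,y,z]₂ := (z ⊥ y) ⊢ x − x ⊣ (z ⊥ y) is a (right) ternary Leibniz algebra. -/
theorem triassoc_to_ternaryLeibniz₂ {K A : Type*} [Field K] [AddCommGroup A] [Module K A]
    (l m r : A → A → A) (h : IsTriassoc K l m r) :
    IsTernaryLeibnizR K (fun x y z => r (m z y) x - l x (m z y)) := by
  have ls1 : ∀ p a b, l (a - b) p = l a p - l b p := fun p a b => (h.l_lin₁ p).map_sub a b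
  have ls2 : ∀ p a b, l p (a - b) = l p a - l p b := fun p a b => (h.l_lin₂ p).map_sub a b
  have ms1 : ∀ p a b, m (a - b) p = m a p - m b p := fun p a b => (h.m_lin₁ p).map_sub a b
  have ms2 : ∀ p a b, m p (a - b) = m p a - m p b := fun p a b => (h.m_lin₂ p).map_sub a b
  have rs1 : ∀ p a b, r (a - b) p = r a p - r b p := fun p a b => (h.r_lin₁ p).map_sub a b
  have rs2 : ∀ p a b, r p (a - b) = r p a - r p b := fun p a b => (h.r_lin₂ p).map_sub a b
  constructor
  · intro y z
    constructor
    · intro a b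
      simp only [(h.r_lin₂ (m z y)).map_add, (h.l_lin₁ (m z y)).map_add]
      abel
    · intro c a
      simp only [(h.r_lin₂ (m z y)).map_smul, (h.l_lin₁ (m z y)).map_smul, smul_sub]
  · intro x z
    constructor
    · intro a b
      simp only [(h.m_lin₂ z).map_add, (h.r_lin₁ x).map_add, (h.l_lin₂ x).map_add]
      abel
    · intro c a
      simp only [(h.m_lin₂ z).map_smul, (h.r_lin₁ x).map_smul, (h.l_lin₂ x).map_smul,
        smul_sub]
  · intro x y
    constructor
    · intro a b
      simp only [(h.m_lin₁ y).map_add, (h.r_lin₁ x).map_add, (h.l_lin₂ x).map_add]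
      abel
    · intro c a
      simp only [(h.m_lin₁ y).map_smul, (h.r_lin₁ x).map_smul, (h.l_lin₂ x).map_smul,
        smul_sub]
  · intro x y z t u
    simp only [ls1, ls2, ms1, ms2, rs1, rs2,
      h.ax1, h.ax2, h.ax3, h.ax4, h.ax5, h.ax6, h.ax7, h.ax8, h.ax9, h.ax10, h.ax11]
    have key : ∀ a b c, l a (r b c) = l a (l b c) := fun a b c => by rw [← h.ax4, h.ax1]
    simp only [← h.ax8, key, h.ax9]
    abel
end

section
/- Let (L, P, φ) be a crossed module of (right) Leibniz algebras over a field K, with action of P on L given by μ₁ : L × P → L and μ₂ : P × L → L. Let R be a linear map that is simultaneously a Rota–Baxter operator of weight λ on L and on P, commuting with φ (φ∘R = R∘φ), and compatible with the action in the sense that μ₁(R(l), R(p)) = R(μ₁(R(l), p) + μ₁(l, R(p)) + λμ₁(l, p)) and μ₂(R(p), R(l)) = R(μ₂(R(p), l) + μ₂(p, R(l)) + λμ₂(p, l)) for all l ∈ L, p ∈ P. Define μ₁^R(l, p) = μ₁(R(l), p) + μ₁(l, R(p)) + λμ₁(l, p) and μ₂^R(p, l) = μ₂(R(p), l) + μ₂(p,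 R(l)) + λμ₂(p, l). Then (L_R, P_R, φ), where L_R = (L, [-,-]_R) and P_R = (P, [-,-]_R), is a crossed module of Leibniz algebras with the action of P_R on L_R given by μ₁^R and μ₂^R. -/
/-- An action of a (right) Leibniz algebra `(P, bP)` on a (right) Leibniz algebra `(L, bL)`. -/
structure IsLeibnizAction (K : Type*) [Field K] {L P : Type*}
    [AddCommGroup L] [Module K L] [AddCommGroup P] [Module K P]
    (bL : L → L → L) (bP : P → P → P)
    (μ₁ : L → P → L) (μ₂ : P → L → L) : Prop where
  μ₁_lin₁ : ∀ p, IsLinearMap K (fun l => μ₁ l p)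
  μ₁_lin₂ : ∀ l, IsLinearMap K (fun p => μ₁ l p)
  μ₂_lin₁ : ∀ l, IsLinearMap K (fun p => μ₂ p l)
  μ₂_lin₂ : ∀ p, IsLinearMap K (fun l => μ₂ p l)
  a1 : ∀ l₁ l₂ p, μ₁ (bL l₁ l₂) p = bL l₁ (μ₁ l₂ p) + bL (μ₁ l₁ p) l₂
  a2 : ∀ l₁ l₂ p, bL (μ₁ l₁ p) l₂ = bL l₁ (μ₂ p l₂) + μ₁ (bL l₁ l₂) p
  a3 : ∀ l₁ l₂ p, bL (μ₂ p l₁) l₂ = μ₂ p (bL l₁ l₂) + bL (μ₂ p l₂) l₁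
  a4 : ∀ l p₁ p₂, μ₂ (bP p₁ p₂) l = μ₂ p₁ (μ₂ p₂ l) + μ₁ (μ₂ p₁ l) p₂
  a5 : ∀ l p₁ p₂, μ₁ (μ₂ p₁ l) p₂ = μ₂ p₁ (μ₁ l p₂) + μ₂ (bP p₁ p₂) l
  a6 : ∀ l p₁ p₂, μ₁ (μ₁ l p₁) p₂ = μ₁ l (bP p₁ p₂) + μ₁ (μ₁ l p₂) p₁

/-- A crossed module of (right) Leibniz algebras. -/
structure IsLeibnizCrossedModule (K : Type*) [Field K] {L P : Type*}
    [AddCommGroup L] [Module K L] [AddCommGroup P] [Module K P]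
    (bL : L → L → L) (bP : P → P → P)
    (μ₁ : L → P → L) (μ₂ : P → L → L) (φ : L →ₗ[K] P) : Prop where
  leibL : IsLeibnizR K bL
  leibP : IsLeibnizR K bP
  action : IsLeibnizAction K bL bP μ₁ μ₂
  morph : ∀ l₁ l₂, φ (bL l₁ l₂) = bP (φ l₁) (φ l₂)
  c1 : ∀ l p, φ (μ₁ l p) = bP (φ l) p
  c2 : ∀ p l, φ (μ₂ p l) = bP p (φ l)
  c3 : ∀ l₁ l₂, μ₂ (φ l₁) l₂ = bL l₁ l₂
  c4 : ∀ l₁ l₂, μ₁ l₁ (φ l₂) = bL l₁ l₂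

theorem rotaBaxter_leibniz_crossedModule {K L P : Type*} [Field K]
    [AddCommGroup L] [Module K L] [AddCommGroup P] [Module K P]
    (bL : L → L → L) (bP : P → P → P)
    (μ₁ : L → P → L) (μ₂ : P → L → L) (φ : L →ₗ[K] P)
    (hcm : IsLeibnizCrossedModule K bL bP μ₁ μ₂ φ)
    (RL : L →ₗ[K] L) (RP : P →ₗ[K] P) (lam : K)
    (hRL : ∀ x y, bL (RL x) (RL y) = RL (rbBin bL RL lam x y))
    (hRP : ∀ x y, bP (RP x) (RP y) = RP (rbBin bP RP lam x y))
    (hcomm : ∀ l, φ (RL l) = RP (φ l))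
    (hμ₁ : ∀ l p, μ₁ (RL l) (RP p)
      = RL (μ₁ (RL l) p + μ₁ l (RP p) + lam • μ₁ l p))
    (hμ₂ : ∀ p l, μ₂ (RP p) (RL l)
      = RL (μ₂ (RP p) l + μ₂ p (RL l) + lam • μ₂ p l)) :
    IsLeibnizCrossedModule K (rbBin bL RL lam) (rbBin bP RP lam)
      (fun l p => μ₁ (RL l) p + μ₁ l (RP p) + lam • μ₁ l p)
      (fun p l => μ₂ (RP p) l + μ₂ p (RL l) + lam • μ₂ p l) φ := by
  obtain ⟨⟨lL1, lL2, leibL⟩, ⟨lP1, lP2, leibP⟩,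
    ⟨m11, m12, m21, m22, a1, a2, a3, a4, a5, a6⟩, morph, c1, c2, c3, c4⟩ := hcm
  simp only [rbBin] at hRL hRP ⊢
  have bL_add1 : ∀ x y z, bL (x + y) z = bL x z + bL y z := fun x y z => (lL1 z).map_add x y
  have bL_smul1 : ∀ (a : K) x z, bL (a • x) z = a • bL x z := fun a x z => (lL1 z).map_smul a x
  have bL_add2 : ∀ x y z, bL x (y + z) = bL x y + bL x z := fun x y z => (lL2 x).map_add y z
  have bL_smul2 : ∀ (a : K) x z, bL x (a • z) = a • bL x z := fun a x z => (lL2 x).map_smul a z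
  have bP_add1 : ∀ x y z, bP (x + y) z = bP x z + bP y z := fun x y z => (lP1 z).map_add x y
  have bP_smul1 : ∀ (a : K) x z, bP (a • x) z = a • bP x z := fun a x z => (lP1 z).map_smul a x
  have bP_add2 : ∀ x y z, bP x (y + z) = bP x y + bP x z := fun x y z => (lP2 x).map_add y z
  have bP_smul2 : ∀ (a : K) x z, bP x (a • z) = a • bP x z := fun a x z => (lP2 x).map_smul a z
  have μ₁_add1 : ∀ x y p, μ₁ (x + y) p = μ₁ x p + μ₁ y p := fun x y p => (m11 p).map_add x y
  have μ₁_smul1 : ∀ (a : K) x p, μ₁ (a • x) p = a • μ₁ x p := fun a x p => (m11 p).map_smul a x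
  have μ₁_add2 : ∀ l p q, μ₁ l (p + q) = μ₁ l p + μ₁ l q := fun l p q => (m12 l).map_add p q
  have μ₁_smul2 : ∀ (a : K) l p, μ₁ l (a • p) = a • μ₁ l p := fun a l p => (m12 l).map_smul a p
  have μ₂_add1 : ∀ p q l, μ₂ (p + q) l = μ₂ p l + μ₂ q l := fun p q l => (m21 l).map_add p q
  have μ₂_smul1 : ∀ (a : K) p l, μ₂ (a • p) l = a • μ₂ p l := fun a p l => (m21 l).map_smul a p
  have μ₂_add2 : ∀ p x y, μ₂ p (x + y) = μ₂ p x + μ₂ p y := fun p x y => (m22 p).map_add x y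
  have μ₂_smul2 : ∀ (a : K) p x, μ₂ p (a • x) = a • μ₂ p x := fun a p x => (m22 p).map_smul a x
  have hRL' : ∀ x y, RL (bL (RL x) y + bL x (RL y) + lam • bL x y) = bL (RL x) (RL y) :=
    fun x y => (hRL x y).symm
  have hRP' : ∀ x y, RP (bP (RP x) y + bP x (RP y) + lam • bP x y) = bP (RP x) (RP y) :=
    fun x y => (hRP x y).symm
  have hμ₁' : ∀ l p, RL (μ₁ (RL l) p + μ₁ l (RP p) + lam • μ₁ l p) = μ₁ (RL l) (RP p) :=
    fun l p => (hμ₁ l p).symm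
  have hμ₂' : ∀ p l, RL (μ₂ (RP p) l + μ₂ p (RL l) + lam • μ₂ p l) = μ₂ (RP p) (RL l) :=
    fun p l => (hμ₂ p l).symm
  refine ⟨⟨fun y => ⟨fun a b => ?_, fun c a => ?_⟩, fun x => ⟨fun a b => ?_, fun c a => ?_⟩, fun x y z => ?_⟩,
          ⟨fun y => ⟨fun a b => ?_, fun c a => ?_⟩, fun x => ⟨fun a b => ?_, fun c a => ?_⟩, fun x y z => ?_⟩,
          ⟨fun p => ⟨fun a b => ?_, fun c a => ?_⟩, fun l => ⟨fun a b => ?_, fun c a => ?_⟩,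
           fun l => ⟨fun a b => ?_, fun c a => ?_⟩, fun p => ⟨fun a b => ?_, fun c a => ?_⟩,
           fun l₁ l₂ p => ?_, fun l₁ l₂ p => ?_, fun l₁ l₂ p => ?_,
           fun l p₁ p₂ => ?_, fun l p₁ p₂ => ?_, fun l p₁ p₂ => ?_⟩,
          fun l₁ l₂ => ?_, fun l p => ?_, fun p l => ?_, fun l₁ l₂ => ?_, fun l₁ l₂ => ?_⟩
  -- linearity goals
  · simp only [rbBin, map_add, bL_add1, bL_add2, smul_add]; module
  · simp only [rbBin, map_smul, bL_smul1, bL_smul2, smul_smul]; module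
  · simp only [rbBin, map_add, bL_add1, bL_add2, smul_add]; module
  · simp only [rbBin, map_smul, bL_smul1, bL_smul2, smul_smul]; module
  · -- Leibniz identity for deformed bL
    simp only [rbBin, hRL', map_add, map_smul, bL_add1, bL_add2, bL_smul1, bL_smul2, smul_add, smul_smul]
    linear_combination (norm := module) leibL (RL x) (RL y) z + leibL (RL x) y (RL z) +
      leibL x (RL y) (RL z) + lam • leibL (RL x) y z + lam • leibL x (RL y) z +
      lam • leibL x y (RL z) + (lam * lam) • leibL x y z
  · simp only [rbBin, map_add, bP_add1, bP_add2, smul_add]; module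
  · simp only [rbBin, map_smul, bP_smul1, bP_smul2, smul_smul]; module
  · simp only [rbBin, map_add, bP_add1, bP_add2, smul_add]; module
  · simp only [rbBin, map_smul, bP_smul1, bP_smul2, smul_smul]; module
  · simp only [rbBin, hRP', map_add, map_smul, bP_add1, bP_add2, bP_smul1, bP_smul2, smul_add, smul_smul]
    linear_combination (norm := module) leibP (RP x) (RP y) z + leibP (RP x) y (RP z) +
      leibP x (RP y) (RP z) + lam • leibP (RP x) y z + lam • leibP x (RP y) z +
      lam • leibP x y (RP z) + (lam * lam) • leibP x y z
  · simp only [rbBin, map_add, μ₁_add1, μ₁_add2, smul_add]; module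
  · simp only [rbBin, map_smul, μ₁_smul1, μ₁_smul2, smul_smul]; module
  · simp only [rbBin, map_add, μ₁_add1, μ₁_add2, smul_add]; module
  · simp only [rbBin, map_smul, μ₁_smul1, μ₁_smul2, smul_smul]; module
  · simp only [rbBin, map_add, μ₂_add1, μ₂_add2, smul_add]; module
  · simp only [rbBin, map_smul, μ₂_smul1, μ₂_smul2, smul_smul]; module
  · simp only [rbBin, map_add, μ₂_add1, μ₂_add2, smul_add]; module
  · simp only [rbBin, map_smul, μ₂_smul1, μ₂_smul2, smul_smul]; module
  · -- a1
    simp only [rbBin, hRL', hμ₁', hμ₂', map_add, map_smul, bL_add1, bL_add2, bL_smul1, bL_smul2,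
      μ₁_add1, μ₁_add2, μ₁_smul1, μ₁_smul2, μ₂_add1, μ₂_add2, μ₂_smul1, μ₂_smul2,
      smul_add, smul_smul]
    linear_combination (norm := module) a1 (RL l₁) (RL l₂) p + a1 (RL l₁) l₂ (RP p) +
      a1 l₁ (RL l₂) (RP p) + lam • a1 (RL l₁) l₂ p + lam • a1 l₁ (RL l₂) p +
      lam • a1 l₁ l₂ (RP p) + (lam * lam) • a1 l₁ l₂ p
  · -- a2
    simp only [rbBin, hRL', hμ₁', hμ₂', map_add, map_smul, bL_add1, bL_add2, bL_smul1, bL_smul2,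
      μ₁_add1, μ₁_add2, μ₁_smul1, μ₁_smul2, μ₂_add1, μ₂_add2, μ₂_smul1, μ₂_smul2,
      smul_add, smul_smul]
    linear_combination (norm := module) a2 (RL l₁) (RL l₂) p + a2 (RL l₁) l₂ (RP p) +
      a2 l₁ (RL l₂) (RP p) + lam • a2 (RL l₁) l₂ p + lam • a2 l₁ (RL l₂) p +
      lam • a2 l₁ l₂ (RP p) + (lam * lam) • a2 l₁ l₂ p
  · -- a3
    simp only [rbBin, hRL', hμ₁', hμ₂', map_add, map_smul, bL_add1, bL_add2, bL_smul1, bL_smul2,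
      μ₁_add1, μ₁_add2, μ₁_smul1, μ₁_smul2, μ₂_add1, μ₂_add2, μ₂_smul1, μ₂_smul2,
      smul_add, smul_smul]
    linear_combination (norm := module) a3 (RL l₁) (RL l₂) p + a3 (RL l₁) l₂ (RP p) +
      a3 l₁ (RL l₂) (RP p) + lam • a3 (RL l₁) l₂ p + lam • a3 l₁ (RL l₂) p +
      lam • a3 l₁ l₂ (RP p) + (lam * lam) • a3 l₁ l₂ p
  · -- a4
    simp only [rbBin, hRP', hμ₁', hμ₂', map_add, map_smul, bL_add1, bL_add2, bL_smul1, bL_smul2,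
      μ₁_add1, μ₁_add2, μ₁_smul1, μ₁_smul2, μ₂_add1, μ₂_add2, μ₂_smul1, μ₂_smul2,
      smul_add, smul_smul]
    linear_combination (norm := module) a4 (RL l) (RP p₁) p₂ + a4 (RL l) p₁ (RP p₂) +
      a4 l (RP p₁) (RP p₂) + lam • a4 (RL l) p₁ p₂ + lam • a4 l (RP p₁) p₂ +
      lam • a4 l p₁ (RP p₂) + (lam * lam) • a4 l p₁ p₂
  · -- a5
    simp only [rbBin, hRP', hμ₁', hμ₂', map_add, map_smul, bL_add1, bL_add2, bL_smul1, bL_smul2,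
      μ₁_add1, μ₁_add2, μ₁_smul1, μ₁_smul2, μ₂_add1, μ₂_add2, μ₂_smul1, μ₂_smul2,
      smul_add, smul_smul]
    linear_combination (norm := module) a5 (RL l) (RP p₁) p₂ + a5 (RL l) p₁ (RP p₂) +
      a5 l (RP p₁) (RP p₂) + lam • a5 (RL l) p₁ p₂ + lam • a5 l (RP p₁) p₂ +
      lam • a5 l p₁ (RP p₂) + (lam * lam) • a5 l p₁ p₂
  · -- a6
    simp only [rbBin, hRP', hμ₁', hμ₂', map_add, map_smul, bL_add1, bL_add2, bL_smul1, bL_smul2,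
      μ₁_add1, μ₁_add2, μ₁_smul1, μ₁_smul2, μ₂_add1, μ₂_add2, μ₂_smul1, μ₂_smul2,
      smul_add, smul_smul]
    linear_combination (norm := module) a6 (RL l) (RP p₁) p₂ + a6 (RL l) p₁ (RP p₂) +
      a6 l (RP p₁) (RP p₂) + lam • a6 (RL l) p₁ p₂ + lam • a6 l (RP p₁) p₂ +
      lam • a6 l p₁ (RP p₂) + (lam * lam) • a6 l p₁ p₂
  · -- morph
    simp only [rbBin, map_add, map_smul, morph, hcomm]
  · -- c1
    simp only [rbBin, map_add, map_smul, c1, hcomm]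
  · -- c2
    simp only [rbBin, map_add, map_smul, c2, hcomm]
  · -- c3
    simp only [rbBin, ← hcomm, c3]
  · -- c4
    simp only [rbBin, ← hcomm, c4]
end
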